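/- arXiv:gr-qc/0103030 — 3 statements merged into one kernel-verified Lean document; each statement's English description precedes it below -/
import Mathlib

section
/- Let J ∈ ℝ³ be a fixed vector and let Ψ_J be the Bowen–York angular-momentum tensor. Then Ψ_J is divergence-free with respect to the flat metric on ℝ³ \ {0}: for every x ∈ ℝ³ \ {0} and every index b ∈ {1,2,3}, ∑_{a=1}^{3} ∂_a (Ψ_J)_{ab}(x) = 0, where ∂_a denotes the partial derivative in the a-th coordinate direction. -/
open scoped RealInnerProductSpace

noncomputable abbrev E3 := EuclideanSpace ℝ (Fin 3)

lemma hasFDerivAt_norm_euc (x : E3) (hx : x ≠ 0) :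
    HasFDerivAt (fun y : E3 => ‖y‖) (‖x‖⁻¹ • innerSL ℝ x) x := by
  have h0 : (0:ℝ) < ‖x‖ := norm_pos_iff.mpr hx
  have hsq : HasFDerivAt (fun y : E3 => ⟪y, y⟫)
      ((fderivInnerCLM ℝ (x, x)).comp
        ((ContinuousLinearMap.id ℝ E3).prod (ContinuousLinearMap.id ℝ E3))) x :=
    (hasFDerivAt_id x).inner ℝ (hasFDerivAt_id x)
  have hne : ⟪x, x⟫ ≠ 0 := inner_self_ne_zero.mpr hx
  have hrt : HasDerivAt Real.sqrt (1 / (2 * Real.sqrt (⟪x, x⟫))) (⟪x, x⟫) :=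
    Real.hasDerivAt_sqrt hne
  have hcomp := HasDerivAt.comp_hasFDerivAt (f := fun y : E3 => ⟪y, y⟫) x hrt hsq
  have hfun : (fun y : E3 => Real.sqrt ⟪y, y⟫) = fun y : E3 => ‖y‖ := by
    funext y
    rw [real_inner_self_eq_norm_mul_norm, Real.sqrt_mul_self (norm_nonneg y)]
  rw [Function.comp_def, hfun] at hcomp
  have hs : Real.sqrt (⟪x, x⟫) = ‖x‖ := by
    rw [real_inner_self_eq_norm_mul_norm, Real.sqrt_mul_self (norm_nonneg x)]
  refine hcomp.congr_fderiv ?_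
  ext v
  simp only [ContinuousLinearMap.smul_apply, innerSL_apply_apply,
    ContinuousLinearMap.comp_apply, ContinuousLinearMap.prod_apply,
    ContinuousLinearMap.id_apply, fderivInnerCLM_apply, smul_eq_mul, hs]
  rw [real_inner_comm v x]
  field_simp
  ring

/-- Cross product of two vectors in `ℝ³`. -/
def cross3 (u v : Fin 3 → ℝ) : Fin 3 → ℝ :=
  ![u 1 * v 2 - u 2 * v 1, u 2 * v 0 - u 0 * v 2, u 0 * v 1 - u 1 * v 0]

/-- The Bowen–York angular-momentum tensor with spin parameter `J`:
`Ψ_J(x)_{ab} = (3/|x|³)·(n_a (J × n)_b + n_b (J × n)_a)` where `n = x/|x|`. -/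
noncomputable def byTensor (J x : EuclideanSpace ℝ (Fin 3)) : Matrix (Fin 3) (Fin 3) ℝ :=
  fun a b =>
    (3 / ‖x‖ ^ 3) *
      ((x a / ‖x‖) * cross3 (fun i => J i) (fun i => x i / ‖x‖) b +
        (x b / ‖x‖) * cross3 (fun i => J i) (fun i => x i / ‖x‖) a)

/-- `i`-th component of `J × y`, as a function of `y`. -/
def crossK (J : EuclideanSpace ℝ (Fin 3)) (i : Fin 3) (y : EuclideanSpace ℝ (Fin 3)) : ℝ :=
  cross3 (fun j => J j) (fun j => y j) i

/-- `crossK J i` as a continuous linear map. -/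
noncomputable def crossL (J : EuclideanSpace ℝ (Fin 3)) : Fin 3 → (E3 →L[ℝ] ℝ) :=
  ![J 1 • EuclideanSpace.proj 2 - J 2 • EuclideanSpace.proj 1,
    J 2 • EuclideanSpace.proj 0 - J 0 • EuclideanSpace.proj 2,
    J 0 • EuclideanSpace.proj 1 - J 1 • EuclideanSpace.proj 0]

lemma crossK_eq (J : E3) (i : Fin 3) : crossK J i = fun y => crossL J i y := by
  fin_cases i <;> (funext y; simp [crossK, cross3, crossL])

lemma hasFDerivAt_crossK (J x : E3) (i : Fin 3) :
    HasFDerivAt (crossK J i) (crossL J i) x := by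
  rw [crossK_eq]; exact (crossL J i).hasFDerivAt

lemma hasFDerivAt_proj (x : E3) (c : Fin 3) :
    HasFDerivAt (fun y : E3 => y c) (EuclideanSpace.proj c : E3 →L[ℝ] ℝ) x :=
  (EuclideanSpace.proj c (𝕜 := ℝ)).hasFDerivAt

lemma byTensor_eq (J y : E3) (hy : y ≠ 0) (a b : Fin 3) :
    byTensor J y a b =
      3 * (y a * crossK J b y + y b * crossK J a y) * (‖y‖ ^ 5)⁻¹ := by
  have hn : ‖y‖ ≠ 0 := norm_ne_zero_iff.mpr hy
  have hcr : ∀ i, cross3 (fun j => J j) (fun j => y j / ‖y‖) i = crossK J i y / ‖y‖ := by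
    intro i
    fin_cases i <;> (simp [cross3, crossK]; ring)
  unfold byTensor
  rw [hcr, hcr]
  field_simp
  try ring
  try exact Or.inl trivial

lemma key (J x : E3) (hx : x ≠ 0) (a b : Fin 3) :
    fderiv ℝ (fun y => byTensor J y a b) x =
      (3 * (x a * crossK J b x + x b * crossK J a x)) •
          ((-((‖x‖ ^ 5) ^ 2)⁻¹) • ((5 * ‖x‖ ^ 4) • (‖x‖⁻¹ • innerSL ℝ x)))
        + (‖x‖ ^ 5)⁻¹ •
          ((3 : ℝ) •
            ((x a • crossL J b + crossK J b x • (EuclideanSpace.proj a : E3 →L[ℝ] ℝ))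
              + (x b • crossL J a + crossK J a x • (EuclideanSpace.proj b : E3 →L[ℝ] ℝ)))) := by
  have hn : ‖x‖ ≠ 0 := norm_ne_zero_iff.mpr hx
  have hN := hasFDerivAt_norm_euc x hx
  have hp : HasFDerivAt (fun y : E3 => y a * crossK J b y + y b * crossK J a y)
      ((x a • crossL J b + crossK J b x • (EuclideanSpace.proj a : E3 →L[ℝ] ℝ))
        + (x b • crossL J a + crossK J a x • (EuclideanSpace.proj b : E3 →L[ℝ] ℝ))) x :=
    ((hasFDerivAt_proj x a).mul (hasFDerivAt_crossK J x b)).add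
      ((hasFDerivAt_proj x b).mul (hasFDerivAt_crossK J x a))
  have hden := HasDerivAt.comp_hasFDerivAt (f := fun y : E3 => ‖y‖) x
    (hasDerivAt_pow 5 ‖x‖) hN
  have hinv := HasDerivAt.comp_hasFDerivAt (f := fun y : E3 => ‖y‖ ^ 5) x
    (hasDerivAt_inv (pow_ne_zero 5 hn)) hden
  simp only [Function.comp_def] at hden hinv
  have hmul := (hp.const_mul (3:ℝ)).mul hinv
  have hEq : (fun y : E3 => byTensor J y a b) =ᶠ[nhds x]
      (fun y : E3 => 3 * (y a * crossK J b y + y b * crossK J a y) * (‖y‖ ^ 5)⁻¹) := by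
    filter_upwards [isOpen_compl_singleton.mem_nhds (by simpa using hx)] with y hy
    exact byTensor_eq J y (by simpa using hy) a b
  rw [hEq.fderiv_eq, (show HasFDerivAt (fun y : E3 => 3 * (y a * crossK J b y + y b * crossK J a y) * (‖y‖ ^ 5)⁻¹) _ x from hmul).fderiv]
  ext v
  simp only [ContinuousLinearMap.add_apply, ContinuousLinearMap.smul_apply,
    ContinuousLinearMap.coe_smul', Pi.smul_apply, smul_eq_mul, innerSL_apply_apply]
  ring

set_option maxHeartbeats 1000000 in
/-- The Bowen–York tensor is divergence-free with respect to the flat metric on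
`ℝ³ \ {0}`: for every `x ≠ 0` and every index `b`, `∑ₐ ∂ₐ (Ψ_J)_{ab}(x) = 0`. -/
theorem byTensor_divergenceFree (J : EuclideanSpace ℝ (Fin 3))
    (x : EuclideanSpace ℝ (Fin 3)) (hx : x ≠ 0) (b : Fin 3) :
    ∑ a : Fin 3,
      fderiv ℝ (fun y : EuclideanSpace ℝ (Fin 3) => byTensor J y a b) x
        (EuclideanSpace.single a 1) = 0 := by
  have hn : ‖x‖ ≠ 0 := norm_ne_zero_iff.mpr hx
  have hr2 : ‖x‖ ^ 2 = x 0 ^ 2 + x 1 ^ 2 + x 2 ^ 2 := by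
    rw [EuclideanSpace.norm_eq, Real.sq_sqrt (by positivity)]
    simp [Fin.sum_univ_three, sq_abs]
  rw [Fin.sum_univ_three, key J x hx 0 b, key J x hx 1 b, key J x hx 2 b]
  fin_cases b <;>
    simp only [ContinuousLinearMap.add_apply, ContinuousLinearMap.smul_apply,
      ContinuousLinearMap.coe_smul', Pi.smul_apply, smul_eq_mul, innerSL_apply_apply, EuclideanSpace.inner_single_right,
      ContinuousLinearMap.sub_apply, crossL, crossK, cross3, Matrix.cons_val_zero,
      Matrix.cons_val_one, Matrix.head_cons, Matrix.cons_val_two, Matrix.tail_cons,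
      PiLp.proj_apply, PiLp.inner_apply, RCLike.inner_apply, conj_trivial,
      EuclideanSpace.single_apply, Fin.sum_univ_three, Fin.isValue, reduceIte]
  · norm_num [Fin.ext_iff]
    field_simp
    linear_combination (15 * (J 1 * x 2 - J 2 * x 1)) * hr2
  · norm_num [Fin.ext_iff]
    field_simp
    linear_combination (15 * (J 2 * x 0 - J 0 * x 2)) * hr2
  · norm_num [Fin.ext_iff]
    field_simp
    linear_combination (15 * (J 0 * x 1 - J 1 * x 0)) * hr2
end

section
/- Let η : ℝ³ → ℝ³ be the axial rotation Killing field η(x) = (−x₂, x₁, 0), with squared norm λ(x) = x₁² + x₂², and let U = {x ∈ ℝ³ : x₁² + x₂² ≠ 0}. Let ω : U → ℝ be a C² function that is axially symmetric, i.e. ⟨η(x), ∇ω(x)⟩ = 0 for all x ∈ U. Define the vector field S(x) = (1/λ(x)) (η(x) × ∇ω(x)), where × is the cross product and ∇ω is the gradient of ω. Then S satisfies on U: (i) ⟨S(x), η(x)⟩ = 0; (ii) ∑_{a=1}^{3} ∂_a S_a(x) = 0; (iii) the Lie bracket [η, S] vanishes, i.e. ∑_b η_b(x) ∂_b S_a(x)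 − ∑_b S_b(x) ∂_b η_a(x) = 0 for all a. -/
/-- The axial rotation Killing field `η(x) = (−x₂, x₁, 0)` on `ℝ³`. -/
def axialEta (x : Fin 3 → ℝ) : Fin 3 → ℝ := ![-(x 1), x 0, 0]

/-- The squared norm `λ(x) = x₁² + x₂²` of the axial Killing field. -/
def axialLam (x : Fin 3 → ℝ) : ℝ := x 0 ^ 2 + x 1 ^ 2

/-- The complement of the symmetry axis: `U = {x ∈ ℝ³ : x₁² + x₂² ≠ 0}`. -/
def axialU : Set (Fin 3 → ℝ) := {x | x 0 ^ 2 + x 1 ^ 2 ≠ 0}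

/-- The gradient of a scalar function on `ℝ³`. -/
noncomputable def grad3 (ω : (Fin 3 → ℝ) → ℝ) (x : Fin 3 → ℝ) : Fin 3 → ℝ :=
  fun a => fderiv ℝ ω x (Pi.single a 1)

/-- The source vector `S = (1/λ) η × ∇ω` built from a scalar potential `ω`. -/
noncomputable def axialS (ω : (Fin 3 → ℝ) → ℝ) (x : Fin 3 → ℝ) : Fin 3 → ℝ :=
  (1 / axialLam x) • cross3 (axialEta x) (grad3 ω x)

/-- Second partial derivatives of the potential: `axQ ω x b a = ∂_b ∂_a ω`. -/
noncomputable def axQ (ω : (Fin 3 → ℝ) → ℝ) (x : Fin 3 → ℝ) (b a : Fin 3) : ℝ :=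
  fderiv ℝ (fun y => grad3 ω y a) x (Pi.single b 1)

/-- Kronecker delta on `Fin 3`. -/
def axd (i b : Fin 3) : ℝ := if i = b then 1 else 0

/-- Projection onto the `i`-th coordinate as a continuous linear map. -/
abbrev prj (i : Fin 3) : (Fin 3 → ℝ) →L[ℝ] ℝ := ContinuousLinearMap.proj i

lemma axialU_open : IsOpen axialU :=
  isOpen_compl_singleton.preimage
    (((continuous_apply (0 : Fin 3)).pow 2).add ((continuous_apply 1).pow 2))

lemma hasFDerivAt_axialLam (x : Fin 3 → ℝ) :
    HasFDerivAt axialLam ((2 * x 0) • prj 0 + (2 * x 1) • prj 1) x := by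
  have h0 : HasFDerivAt (fun y : Fin 3 → ℝ => y 0) (prj 0) x := (prj 0).hasFDerivAt
  have h1 : HasFDerivAt (fun y : Fin 3 → ℝ => y 1) (prj 1) x := (prj 1).hasFDerivAt
  have e : axialLam = fun y : Fin 3 → ℝ => y 0 * y 0 + y 1 * y 1 := by
    funext y; simp [axialLam]; ring
  rw [e]
  refine ((h0.fun_mul h0).fun_add (h1.fun_mul h1)).congr_fderiv ?_
  ext v
  simp [ContinuousLinearMap.add_apply, ContinuousLinearMap.smul_apply]
  ring

lemma axgrad_hasFDerivAt (ω : (Fin 3 → ℝ) → ℝ) (hω : ContDiffOn ℝ 2 ω axialU) {x}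
    (hx : x ∈ axialU) (c : Fin 3) :
    HasFDerivAt (fun y => grad3 ω y c) (fderiv ℝ (fun y => grad3 ω y c) x) x := by
  have hC : ContDiffAt ℝ 2 ω x := hω.contDiffAt (axialU_open.mem_nhds hx)
  have hfd : DifferentiableAt ℝ (fderiv ℝ ω) x :=
    (hC.fderiv_right (m := 1) (by norm_num)).differentiableAt one_ne_zero
  exact (hfd.clm_apply (differentiableAt_const _)).hasFDerivAt

lemma axQ_symm (ω : (Fin 3 → ℝ) → ℝ) (hω : ContDiffOn ℝ 2 ω axialU) {x}
    (hx : x ∈ axialU) (a b : Fin 3) : axQ ω x b a = axQ ω x a b := by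
  have hC : ContDiffAt ℝ 2 ω x := hω.contDiffAt (axialU_open.mem_nhds hx)
  have hfd : DifferentiableAt ℝ (fderiv ℝ ω) x :=
    (hC.fderiv_right (m := 1) (by norm_num)).differentiableAt one_ne_zero
  have hsym := hC.isSymmSndFDerivAt (by simp)
  have key : ∀ c d : Fin 3, axQ ω x d c
      = fderiv ℝ (fderiv ℝ ω) x (Pi.single d 1) (Pi.single c 1) := by
    intro c d
    have h : (fun y => grad3 ω y c) = fun y => (fderiv ℝ ω y) (Pi.single c 1) := rfl
    rw [axQ, h, fderiv_clm_apply hfd (differentiableAt_const _)]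
    simp
  rw [key, key, hsym]

lemma pd_axialS (ω : (Fin 3 → ℝ) → ℝ) (hω : ContDiffOn ℝ 2 ω axialU) {x} (hx : x ∈ axialU)
    (a b : Fin 3) :
    fderiv ℝ (fun y => axialS ω y a) x (Pi.single b 1)
      = ![x 0 * grad3 ω x 2, x 1 * grad3 ω x 2, -(x 1 * grad3 ω x 1) - x 0 * grad3 ω x 0] a
          * (-(axialLam x ^ 2)⁻¹ * (2 * x 0 * axd 0 b + 2 * x 1 * axd 1 b))
        + (axialLam x)⁻¹ *
          ![axd 0 b * grad3 ω x 2 + x 0 * axQ ω x b 2,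
            axd 1 b * grad3 ω x 2 + x 1 * axQ ω x b 2,
            -(axd 1 b * grad3 ω x 1 + x 1 * axQ ω x b 1)
              - (axd 0 b * grad3 ω x 0 + x 0 * axQ ω x b 0)] a := by
  have hlam : axialLam x ≠ 0 := hx
  have hg := axgrad_hasFDerivAt ω hω hx
  have h0 : HasFDerivAt (fun y : Fin 3 → ℝ => y 0) (prj 0) x := (prj 0).hasFDerivAt
  have h1 : HasFDerivAt (fun y : Fin 3 → ℝ => y 1) (prj 1) x := (prj 1).hasFDerivAt
  have hL := hasFDerivAt_axialLam x
  have hinv : HasFDerivAt (fun y => (axialLam y)⁻¹)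
      ((-(axialLam x ^ 2)⁻¹) • ((2 * x 0) • prj 0 + (2 * x 1) • prj 1)) x :=
    (hasDerivAt_inv hlam).comp_hasFDerivAt x hL
  fin_cases a <;> [skip; skip; skip] <;> beta_reduce <;>
    simp only [Fin.zero_eta, Fin.mk_one, Fin.reduceFinMk]
  · have e0 : (fun y => axialS ω y 0) = fun y => (y 0 * grad3 ω y 2) * (axialLam y)⁻¹ := by
      funext y; simp [axialS, cross3, axialEta]; ring
    rw [e0, ((h0.fun_mul (hg 2)).fun_mul hinv).fderiv]
    simp [axQ, axd, Pi.single_apply]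
    split_ifs <;> ring
  · have e1 : (fun y => axialS ω y 1) = fun y => (y 1 * grad3 ω y 2) * (axialLam y)⁻¹ := by
      funext y; simp [axialS, cross3, axialEta]; ring
    rw [e1, ((h1.fun_mul (hg 2)).fun_mul hinv).fderiv]
    simp [axQ, axd, Pi.single_apply]
    split_ifs <;> ring
  · have e2 : (fun y => axialS ω y 2)
        = fun y => (-(y 1 * grad3 ω y 1) - y 0 * grad3 ω y 0) * (axialLam y)⁻¹ := by
      funext y; simp [axialS, cross3, axialEta]; ring
    rw [e2, ((((h1.fun_mul (hg 1)).fun_neg).fun_sub (h0.fun_mul (hg 0))).fun_mul hinv).fderiv]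
    simp [axQ, axd, Pi.single_apply]
    split_ifs <;> ring

lemma pd_axialEta (x : Fin 3 → ℝ) (a b : Fin 3) :
    fderiv ℝ (fun y => axialEta y a) x (Pi.single b 1) = ![-(axd 1 b), axd 0 b, 0] a := by
  have h0 : HasFDerivAt (fun y : Fin 3 → ℝ => y 0) (prj 0) x := (prj 0).hasFDerivAt
  have h1 : HasFDerivAt (fun y : Fin 3 → ℝ => y 1) (prj 1) x := (prj 1).hasFDerivAt
  fin_cases a <;> [skip; skip; skip] <;> beta_reduce <;>
    simp only [Fin.zero_eta, Fin.mk_one, Fin.reduceFinMk]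
  · have e : (fun y => axialEta y 0) = fun y : Fin 3 → ℝ => -(y 1) := by
      funext y; simp [axialEta]
    rw [e, h1.fun_neg.fderiv]
    simp [axd, Pi.single_apply, eq_comm]
  · have e : (fun y => axialEta y 1) = fun y : Fin 3 → ℝ => y 0 := by
      funext y; simp [axialEta]
    rw [e, h0.fderiv]
    simp [axd, Pi.single_apply, eq_comm]
  · have e : (fun y => axialEta y 2) = fun _ : Fin 3 → ℝ => (0 : ℝ) := by
      funext y; simp [axialEta]
    rw [e, fderiv_fun_const]
    simp

lemma axialR (ω : (Fin 3 → ℝ) → ℝ) (hω : ContDiffOn ℝ 2 ω axialU)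
    (haxi : ∀ x ∈ axialU, ∑ a : Fin 3, axialEta x a * grad3 ω x a = 0) {x}
    (hx : x ∈ axialU) (b : Fin 3) :
    grad3 ω x 1 * axd 0 b - grad3 ω x 0 * axd 1 b
      - x 1 * axQ ω x b 0 + x 0 * axQ ω x b 1 = 0 := by
  have hg := axgrad_hasFDerivAt ω hω hx
  have h0 : HasFDerivAt (fun y : Fin 3 → ℝ => y 0) (prj 0) x := (prj 0).hasFDerivAt
  have h1 : HasFDerivAt (fun y : Fin 3 → ℝ => y 1) (prj 1) x := (prj 1).hasFDerivAt
  have hF := ((h1.neg.mul (hg 0)).add (h0.mul (hg 1)))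
  have hzero : fderiv ℝ (fun y : Fin 3 → ℝ => -(y 1) * grad3 ω y 0 + y 0 * grad3 ω y 1) x
      = 0 := by
    have heq : (fun y : Fin 3 → ℝ => -(y 1) * grad3 ω y 0 + y 0 * grad3 ω y 1)
        =ᶠ[nhds x] fun _ => (0 : ℝ) := by
      filter_upwards [axialU_open.mem_nhds hx] with y hy
      have := haxi y hy
      simp [Fin.sum_univ_three, axialEta] at this
      linarith [this]
    rw [heq.fderiv_eq, fderiv_fun_const]
    rfl
  have happ := congrArg (fun (L : (Fin 3 → ℝ) →L[ℝ] ℝ) => L (Pi.single b 1))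
    (hF.fderiv.symm.trans hzero)
  simp [axQ, axd, Pi.single_apply] at happ ⊢
  split_ifs at happ ⊢ <;> linarith [happ]

/-- For a `C²` axially symmetric potential `ω` on `U`, the vector field
`S = (1/λ)(η × ∇ω)` is orthogonal to `η`, divergence-free, and has vanishing Lie
bracket with `η` on `U`. -/
theorem axialS_orth_div_lie (ω : (Fin 3 → ℝ) → ℝ) (hω : ContDiffOn ℝ 2 ω axialU)
    (haxi : ∀ x ∈ axialU, ∑ a : Fin 3, axialEta x a * grad3 ω x a = 0) :
    (∀ x ∈ axialU, ∑ a : Fin 3, axialS ω x a * axialEta x a = 0) ∧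
      (∀ x ∈ axialU,
        ∑ a : Fin 3, fderiv ℝ (fun y => axialS ω y a) x (Pi.single a 1) = 0) ∧
      (∀ x ∈ axialU, ∀ a : Fin 3,
        (∑ b : Fin 3,
            axialEta x b * fderiv ℝ (fun y => axialS ω y a) x (Pi.single b 1)) -
          (∑ b : Fin 3,
            axialS ω x b * fderiv ℝ (fun y => axialEta y a) x (Pi.single b 1)) = 0) := by
  refine ⟨?_, ?_, ?_⟩
  · intro x hx
    simp [Fin.sum_univ_three, axialS, cross3, axialEta]
    ring
  · intro x hx
    have hlam : axialLam x ≠ 0 := hx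
    rw [Fin.sum_univ_three, pd_axialS ω hω hx 0 0, pd_axialS ω hω hx 1 1,
      pd_axialS ω hω hx 2 2]
    have h02 : axQ ω x 2 0 = axQ ω x 0 2 := axQ_symm ω hω hx 0 2
    have h12 : axQ ω x 2 1 = axQ ω x 1 2 := axQ_symm ω hω hx 1 2
    have hu : axialLam x * (axialLam x)⁻¹ = 1 := mul_inv_cancel₀ hlam
    have hdef : axialLam x = x 0 ^ 2 + x 1 ^ 2 := rfl
    simp [axd, h02, h12]
    linear_combination (-(2 * grad3 ω x 2) * (axialLam x)⁻¹) * hu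
      + (2 * grad3 ω x 2 * ((axialLam x)⁻¹) ^ 2) * hdef
  · intro x hx a
    have hlam : axialLam x ≠ 0 := hx
    have h02 : axQ ω x 2 0 = axQ ω x 0 2 := axQ_symm ω hω hx 0 2
    have h12 : axQ ω x 2 1 = axQ ω x 1 2 := axQ_symm ω hω hx 1 2
    have h01 : axQ ω x 1 0 = axQ ω x 0 1 := axQ_symm ω hω hx 0 1
    have hR0 := axialR ω hω haxi hx 0
    have hR1 := axialR ω hω haxi hx 1
    have hR2 := axialR ω hω haxi hx 2
    rw [h02, h12] at hR2
    rw [h01] at hR1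
    simp [axd] at hR0 hR1 hR2
    rw [Fin.sum_univ_three, Fin.sum_univ_three,
      pd_axialS ω hω hx a 0, pd_axialS ω hω hx a 1, pd_axialS ω hω hx a 2,
      pd_axialEta x a 0, pd_axialEta x a 1, pd_axialEta x a 2]
    fin_cases a <;> [skip; skip; skip] <;> beta_reduce <;>
      simp only [Fin.zero_eta, Fin.mk_one, Fin.reduceFinMk]
    · simp [axd, axialS, cross3, axialEta, h02, h12, h01]
      linear_combination ((axialLam x)⁻¹ * x 0) * hR2
    · simp [axd, axialS, cross3, axialEta, h02, h12, h01]
      linear_combination ((axialLam x)⁻¹ * x 1) * hR2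
    · simp [axd, axialS, cross3, axialEta, h02, h12, h01]
      linear_combination (-((axialLam x)⁻¹ * x 1)) * hR1
        + (-((axialLam x)⁻¹ * x 0)) * hR0
end

section
/- Let y ∈ ℝ⁴ with |y| = 1, and let Ω = { x ∈ ℝ⁴ : |x| > ⟨x, y⟩ } (that is, ℝ⁴ with the closed ray { t·y : t ≥ 0 } removed). Then the function F : Ω → ℝ defined by F(x) = 1/√( |x| − ⟨x, y⟩ ) is harmonic on Ω: its Euclidean Laplacian ∑_{a=1}^{4} ∂²F/∂x_a² vanishes identically on Ω. -/
/-- The degree `−1/2` homogeneous extension `F(x) = 1/√(|x| − ⟨x,y⟩)` of the Green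
function of the conformal Laplacian on the round `S³` with pole at `y`. -/
noncomputable def greenExt (y x : EuclideanSpace ℝ (Fin 4)) : ℝ :=
  1 / Real.sqrt (‖x‖ - (inner ℝ x y : ℝ))

section aux
variable {E : Type*} [NormedAddCommGroup E] [InnerProductSpace ℝ E]

lemma hasFDerivAt_norm' {z : E} (hz : z ≠ 0) :
    HasFDerivAt (fun w : E => ‖w‖) (‖z‖⁻¹ • innerSL ℝ z) z := by
  have h1 : HasFDerivAt (fun w : E => ‖w‖ ^ 2) (2 • innerSL ℝ z) z :=
    (hasStrictFDerivAt_norm_sq z).hasFDerivAt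
  have hz2 : (‖z‖ : ℝ) ^ 2 ≠ 0 := pow_ne_zero _ (norm_ne_zero_iff.mpr hz)
  have h2 := (Real.hasDerivAt_sqrt hz2).comp_hasFDerivAt z h1
  have h3 : ((fun x => Real.sqrt x) ∘ fun w : E => ‖w‖ ^ 2) = fun w : E => ‖w‖ := by
    funext w; simp [Function.comp, Real.sqrt_sq (norm_nonneg w)]
  rw [h3] at h2
  refine h2.congr_fderiv ?_
  symm
  rw [Real.sqrt_sq (norm_nonneg z)]
  ext v
  simp [smul_smul]
  ring

lemma hasFDerivAt_inner_right (v : E) (z : E) :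
    HasFDerivAt (fun w : E => (inner ℝ w v : ℝ)) (innerSL ℝ v) z := by
  have h := (innerSL ℝ v).hasFDerivAt (x := z)
  have : (fun w : E => (inner ℝ w v : ℝ)) = fun w : E => innerSL ℝ v w := by
    funext w; simp [real_inner_comm]
  rw [this]; exact h

lemma hasFDerivAt_g (y : E) {z : E} (hz : z ≠ 0) :
    HasFDerivAt (fun w : E => ‖w‖ - (inner ℝ w y : ℝ))
      (‖z‖⁻¹ • innerSL ℝ z - innerSL ℝ y) z :=
  (hasFDerivAt_norm' hz).sub (hasFDerivAt_inner_right y z)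

end aux

local notation "E4" => EuclideanSpace ℝ (Fin 4)

lemma isOpen_Omega (y : E4) : IsOpen {z : E4 | (inner ℝ z y : ℝ) < ‖z‖} :=
  isOpen_lt (continuous_id.inner continuous_const) continuous_norm

lemma ne_zero_of_mem (y : E4) {z : E4} (hz : (inner ℝ z y : ℝ) < ‖z‖) : z ≠ 0 := by
  rintro rfl; simp at hz

lemma g_pos (y : E4) {z : E4} (hz : (inner ℝ z y : ℝ) < ‖z‖) :
    0 < ‖z‖ - (inner ℝ z y : ℝ) := sub_pos.mpr hz

lemma hasFDerivAt_greenExt (y : E4) {z : E4} (hz : (inner ℝ z y : ℝ) < ‖z‖) :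
    HasFDerivAt (greenExt y)
      ((-(1/2) * (‖z‖ - (inner ℝ z y : ℝ)) ^ (-(3/2) : ℝ)) •
        (‖z‖⁻¹ • innerSL ℝ z - innerSL ℝ y)) z := by
  have hgz := g_pos y hz
  have hphi : HasDerivAt (fun t : ℝ => t ^ (-(1/2) : ℝ))
      (-(1/2) * (‖z‖ - (inner ℝ z y : ℝ)) ^ ((-(1/2) : ℝ) - 1)) (‖z‖ - (inner ℝ z y : ℝ)) :=
    Real.hasDerivAt_rpow_const (Or.inl hgz.ne')
  have h := hphi.comp_hasFDerivAt z (hasFDerivAt_g y (ne_zero_of_mem y hz))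
  have hexp : (-(1/2) : ℝ) - 1 = -(3/2) := by norm_num
  rw [hexp] at h
  refine h.congr_of_eventuallyEq ?_
  filter_upwards [(isOpen_Omega y).mem_nhds hz] with w hw
  have hgw := g_pos y hw
  simp only [greenExt, Function.comp, one_div, Real.sqrt_eq_rpow,
    ← Real.rpow_neg hgw.le]

/-- Value of the second partial derivative `∂ₐ∂ₐ(greenExt y)` at `x`. -/
lemma second_deriv_val (y : E4) (x : E4) (hx : (inner ℝ x y : ℝ) < ‖x‖) (a : Fin 4) :
    fderiv ℝ
        (fun z : E4 => fderiv ℝ (greenExt y) z (EuclideanSpace.single a 1)) x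
        (EuclideanSpace.single a 1)
      = (-(1/2) * (‖x‖ - (inner ℝ x y : ℝ)) ^ (-(3/2) : ℝ)) *
          (‖x‖⁻¹ + x a * (-(‖x‖ ^ 2)⁻¹ * (‖x‖⁻¹ * x a)))
        + (‖x‖⁻¹ * x a - y a) *
          ((-(1/2) * (-(3/2) * (‖x‖ - (inner ℝ x y : ℝ)) ^ (-(5/2) : ℝ))) *
            (‖x‖⁻¹ * x a - y a)) := by
  have hx0 : x ≠ 0 := ne_zero_of_mem y hx
  have hr : (0:ℝ) < ‖x‖ := norm_pos_iff.mpr hx0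
  have hg := g_pos y hx
  set ea : E4 := EuclideanSpace.single a 1 with hea
  have hixa : (inner ℝ x ea : ℝ) = x a := by
    simp [hea, EuclideanSpace.inner_single_right]
  have hiya : (inner ℝ y ea : ℝ) = y a := by
    simp [hea, EuclideanSpace.inner_single_right]
  have hiaa : (inner ℝ ea ea : ℝ) = 1 := by
    simp [hea, EuclideanSpace.inner_single_right, EuclideanSpace.single_apply]
  -- derivative of the coefficient function `c z = -(1/2) (g z)^(-3/2)`
  have hc : HasFDerivAt
      (fun z : E4 => -(1/2) * (‖z‖ - (inner ℝ z y : ℝ)) ^ (-(3/2) : ℝ))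
      ((-(1/2) * (-(3/2) * (‖x‖ - (inner ℝ x y : ℝ)) ^ (-(5/2) : ℝ))) •
        (‖x‖⁻¹ • innerSL ℝ x - innerSL ℝ y)) x := by
    have hphi : HasDerivAt (fun t : ℝ => t ^ (-(3/2) : ℝ))
        (-(3/2) * (‖x‖ - (inner ℝ x y : ℝ)) ^ ((-(3/2) : ℝ) - 1)) (‖x‖ - (inner ℝ x y : ℝ)) :=
      Real.hasDerivAt_rpow_const (Or.inl hg.ne')
    have h := hphi.comp_hasFDerivAt x (hasFDerivAt_g y hx0)
    have hexp : (-(3/2) : ℝ) - 1 = -(5/2) := by norm_num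
    rw [hexp] at h
    have h2 := h.const_mul (-(1/2) : ℝ)
    refine h2.congr_fderiv ?_
    rw [smul_smul]
  -- derivative of `z ↦ ‖z‖⁻¹`
  have hu : HasFDerivAt (fun z : E4 => ‖z‖⁻¹)
      ((-(‖x‖ ^ 2)⁻¹) • (‖x‖⁻¹ • innerSL ℝ x)) x :=
    (hasDerivAt_inv hr.ne').comp_hasFDerivAt x (hasFDerivAt_norm' hx0)
  -- derivative of `h z = ‖z‖⁻¹ ⟨z, ea⟩ - ⟨y, ea⟩`
  have hh : HasFDerivAt (fun z : E4 => ‖z‖⁻¹ * (inner ℝ z ea : ℝ) - (inner ℝ y ea : ℝ))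
      ((‖x‖⁻¹ • innerSL ℝ ea + (inner ℝ x ea : ℝ) • ((-(‖x‖ ^ 2)⁻¹) • (‖x‖⁻¹ • innerSL ℝ x)))) x :=
    (hu.mul (hasFDerivAt_inner_right ea x)).sub_const _
  have hD := hc.mul hh
  have heq : (fun z : E4 => fderiv ℝ (greenExt y) z ea) =ᶠ[nhds x]
      (fun z : E4 => (-(1/2) * (‖z‖ - (inner ℝ z y : ℝ)) ^ (-(3/2) : ℝ)) *
        (‖z‖⁻¹ * (inner ℝ z ea : ℝ) - (inner ℝ y ea : ℝ))) := by
    filter_upwards [(isOpen_Omega y).mem_nhds hx] with w hw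
    rw [(hasFDerivAt_greenExt y hw).fderiv]
    simp [innerSL_apply_apply]
  rw [heq.fderiv_eq]; erw [hD.fderiv]
  simp only [ContinuousLinearMap.add_apply, ContinuousLinearMap.coe_smul',
    Pi.smul_apply, ContinuousLinearMap.coe_sub', Pi.sub_apply, innerSL_apply_apply,
    smul_eq_mul, hixa, hiya, hiaa]
  ring

/-- For a unit vector `y ∈ ℝ⁴`, the function `F(x) = 1/√(|x| − ⟨x,y⟩)` is harmonic on
`Ω = {x : |x| > ⟨x,y⟩}` (ℝ⁴ minus the closed ray through `y`): `∑ₐ ∂²F/∂xₐ² = 0`. -/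
theorem greenExt_harmonic (y : EuclideanSpace ℝ (Fin 4)) (hy : ‖y‖ = 1)
    (x : EuclideanSpace ℝ (Fin 4)) (hx : (inner ℝ x y : ℝ) < ‖x‖) :
    ∑ a : Fin 4,
      fderiv ℝ
        (fun z : EuclideanSpace ℝ (Fin 4) =>
          fderiv ℝ (greenExt y) z (EuclideanSpace.single a 1)) x
        (EuclideanSpace.single a 1) = 0 := by
  have hx0 : x ≠ 0 := ne_zero_of_mem y hx
  have hr : (0:ℝ) < ‖x‖ := norm_pos_iff.mpr hx0
  have hg := g_pos y hx
  set r : ℝ := ‖x‖ with hrdef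
  set p : ℝ := (inner ℝ x y : ℝ) with hpdef
  set A : ℝ := (r - p) ^ (-(5/2) : ℝ) with hA
  set B : ℝ := (r - p) ^ (-(3/2) : ℝ) with hB
  -- coordinate sums
  have S1 : ∑ a : Fin 4, (x a) ^ 2 = r ^ 2 := by
    rw [hrdef, EuclideanSpace.norm_eq, Real.sq_sqrt (by positivity)]
    simp [sq_abs]
  have S2 : ∑ a : Fin 4, x a * y a = p := by
    rw [hpdef]
    simp [PiLp.inner_apply, RCLike.inner_apply, mul_comm]
  have S3 : ∑ a : Fin 4, (y a) ^ 2 = 1 := by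
    have h : ‖y‖ ^ 2 = 1 := by rw [hy]; norm_num
    rw [← h, EuclideanSpace.norm_eq, Real.sq_sqrt (by positivity)]
    simp [sq_abs]
  -- coefficients
  set C1 : ℝ := -(1/2) * B * (-(r ^ 2)⁻¹ * r⁻¹) + (3/4) * A * (r⁻¹ * r⁻¹) with hC1
  set C2 : ℝ := -(3/2) * A * r⁻¹ with hC2
  set C3 : ℝ := (3/4) * A with hC3
  set C4 : ℝ := -(1/2) * B * r⁻¹ with hC4
  have step : ∀ a : Fin 4,
      fderiv ℝ
        (fun z : EuclideanSpace ℝ (Fin 4) =>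
          fderiv ℝ (greenExt y) z (EuclideanSpace.single a 1)) x
        (EuclideanSpace.single a 1)
      = C1 * (x a) ^ 2 + C2 * (x a * y a) + C3 * (y a) ^ 2 + C4 := by
    intro a
    rw [second_deriv_val y x hx a]
    rw [hC1, hC2, hC3, hC4, hA, hB, hrdef, hpdef]
    ring
  rw [Finset.sum_congr rfl (fun a _ => step a)]
  have hsum : ∑ a : Fin 4,
      (C1 * (x a) ^ 2 + C2 * (x a * y a) + C3 * (y a) ^ 2 + C4)
      = C1 * (∑ a : Fin 4, (x a) ^ 2) + C2 * (∑ a : Fin 4, x a * y a)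
        + C3 * (∑ a : Fin 4, (y a) ^ 2) + 4 * C4 := by
    simp [Finset.sum_add_distrib, Finset.mul_sum]
  rw [hsum, S1, S2, S3]
  -- the rpow relation `B = A * (r - p)`
  have hAB : B = A * (r - p) := by
    rw [hA, hB, show (-(3/2) : ℝ) = -(5/2) + 1 by norm_num,
      Real.rpow_add hg, Real.rpow_one]
  rw [hC1, hC2, hC3, hC4, hAB]
  field_simp
  ring
end
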